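/- With the local objective L_j(θ; R̄_{−j}) = −Tr(R_j⁺(θ)) + (q_j/2)‖R_j(θ)‖_F² + (1−q_j)·Tr(R_j(θ) R̄_{−j}), where R̄_{−j} is treated as constant in θ, if R̄_{−j} = R_{−j}(θ) := (1/(1−q_j)) ∑_{j'≠j} q_{j'} R_{j'}(θ), then ∇_θ L(θ) = ∑_{j=1}^J q_j ∇_θ L_j(θ; R̄_{−j}), where L(θ) = −∑_j q_j Tr(R_j⁺(θ)) + (1/2)‖∑_j q_j R_j(θ)‖_F² is the global objective. -/

import Mathlib

noncomputable section

/-- Squared Frobenius norm of a real matrix. -/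
def frobSq {H : ℕ} (M : Matrix (Fin H) (Fin H) ℝ) : ℝ := ∑ i, ∑ j, (M i j) ^ 2

/-- Gradient alignment: with the stop-gradient local objectives
`L_j(θ; R̄_{−j}) = −Tr(R_j⁺(θ)) + (q_j/2)‖R_j(θ)‖_F² + (1−q_j) Tr(R_j(θ) R̄_{−j})`
evaluated at `R̄_{−j} = R_{−j}(θ₀) = (1/(1−q_j)) ∑_{j'≠j} q_{j'} R_{j'}(θ₀)`,
the gradient of the global objective
`L(θ) = −∑_j q_j Tr(R_j⁺(θ)) + (1/2)‖∑_j q_j R_j(θ)‖_F²` at `θ₀` equals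
`∑_j q_j ∇L_j(θ₀; R̄_{−j})`. -/
theorem gradient_alignment {J H P : ℕ}
    (q : Fin J → ℝ) (hq0 : ∀ j, 0 ≤ q j) (hq1 : ∑ j, q j = 1) (hqlt : ∀ j, q j < 1)
    (Rp R : Fin J → EuclideanSpace ℝ (Fin P) → Matrix (Fin H) (Fin H) ℝ)
    (hRp : ∀ j i k, Differentiable ℝ fun θ => Rp j θ i k)
    (hR : ∀ j i k, Differentiable ℝ fun θ => R j θ i k)
    (hsym : ∀ j θ, (R j θ).IsSymm)
    (θ0 : EuclideanSpace ℝ (Fin P)) :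
    fderiv ℝ (fun θ => -(∑ j, q j * (Rp j θ).trace) + (1 / 2) * frobSq (∑ j, q j • R j θ)) θ0
      = ∑ j, q j • fderiv ℝ (fun θ =>
          -(Rp j θ).trace + (q j / 2) * frobSq (R j θ)
            + (1 - q j) *
              (R j θ * ((1 - q j)⁻¹ • ∑ j' ∈ Finset.univ.erase j, q j' • R j' θ0)).trace) θ0 := by
  classical
  set A : Fin J → Matrix (Fin H) (Fin H) ℝ := fun j => R j θ0 with hA
  set D : Fin J → Fin H → Fin H → (EuclideanSpace ℝ (Fin P) →L[ℝ] ℝ) :=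
    fun j i k => fderiv ℝ (fun θ => R j θ i k) θ0 with hDdef
  set Dp : Fin J → Fin H → (EuclideanSpace ℝ (Fin P) →L[ℝ] ℝ) :=
    fun j i => fderiv ℝ (fun θ => Rp j θ i i) θ0 with hDpdef
  have hD : ∀ j i k, HasFDerivAt (fun θ => R j θ i k) (D j i k) θ0 :=
    fun j i k => ((hR j i k) θ0).hasFDerivAt
  have hDp : ∀ j i, HasFDerivAt (fun θ => Rp j θ i i) (Dp j i) θ0 :=
    fun j i => ((hRp j i i) θ0).hasFDerivAt
  have hglob : HasFDerivAt
      (fun θ => -(∑ j, q j * (Rp j θ).trace) + (1 / 2) * frobSq (∑ j, q j • R j θ))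
      (-(∑ j, q j • ∑ i, Dp j i)
        + (1/2 : ℝ) • ∑ i, ∑ k,
            ((∑ j, q j * A j i k) • (∑ j, q j • D j i k)
              + (∑ j, q j * A j i k) • (∑ j, q j • D j i k))) θ0 := by
    have h1 : HasFDerivAt (fun θ => ∑ j, q j * (Rp j θ).trace)
        (∑ j, q j • ∑ i, Dp j i) θ0 := by
      apply HasFDerivAt.fun_sum
      intro j _
      have : HasFDerivAt (fun θ => (Rp j θ).trace) (∑ i, Dp j i) θ0 := by
        simp only [Matrix.trace, Matrix.diag]
        exact HasFDerivAt.fun_sum fun i _ => hDp j i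
      exact this.const_mul (q j)
    have h2 : HasFDerivAt (fun θ => frobSq (∑ j, q j • R j θ))
        (∑ i, ∑ k,
            ((∑ j, q j * A j i k) • (∑ j, q j • D j i k)
              + (∑ j, q j * A j i k) • (∑ j, q j • D j i k))) θ0 := by
      simp only [frobSq, Matrix.sum_apply, Matrix.smul_apply, smul_eq_mul, pow_two]
      apply HasFDerivAt.fun_sum; intro i _
      apply HasFDerivAt.fun_sum; intro k _
      have hf : HasFDerivAt (fun θ => ∑ j, q j * R j θ i k)
          (∑ j, q j • D j i k) θ0 :=
        HasFDerivAt.fun_sum fun j _ => (hD j i k).const_mul (q j)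
      simpa using hf.fun_mul hf
    exact (h1.neg).add (h2.const_mul (1/2 : ℝ))
  have hloc : ∀ j, HasFDerivAt
      (fun θ => -(Rp j θ).trace + (q j / 2) * frobSq (R j θ)
            + (1 - q j) * (R j θ * ((1 - q j)⁻¹ • ∑ j' ∈ Finset.univ.erase j, q j' • R j' θ0)).trace)
      (-(∑ i, Dp j i)
        + (q j / 2) • (∑ i, ∑ k, ((A j i k) • D j i k + (A j i k) • D j i k))
        + (1 - q j) • (∑ i, ∑ k, (((1 - q j)⁻¹ • ∑ j' ∈ Finset.univ.erase j, q j' • A j') k i) • D j i k)) θ0 := by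
    intro j
    have h1 : HasFDerivAt (fun θ => (Rp j θ).trace) (∑ i, Dp j i) θ0 := by
      simp only [Matrix.trace, Matrix.diag]
      exact HasFDerivAt.fun_sum fun i _ => hDp j i
    have h2 : HasFDerivAt (fun θ => frobSq (R j θ))
        (∑ i, ∑ k, ((A j i k) • D j i k + (A j i k) • D j i k)) θ0 := by
      simp only [frobSq, pow_two]
      apply HasFDerivAt.fun_sum; intro i _
      apply HasFDerivAt.fun_sum; intro k _
      simpa using (hD j i k).fun_mul (hD j i k)
    have h3 : HasFDerivAt (fun θ => (R j θ * ((1 - q j)⁻¹ • ∑ j' ∈ Finset.univ.erase j, q j' • R j' θ0)).trace)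
        (∑ i, ∑ k, (((1 - q j)⁻¹ • ∑ j' ∈ Finset.univ.erase j, q j' • A j') k i) • D j i k) θ0 := by
      simp only [Matrix.trace, Matrix.diag, Matrix.mul_apply]
      apply HasFDerivAt.fun_sum; intro i _
      apply HasFDerivAt.fun_sum; intro k _
      exact (hD j i k).mul_const _
    exact ((h1.neg).add (h2.const_mul _)).add (h3.const_mul _)
  rw [hglob.fderiv]
  conv_rhs => rw [Finset.sum_congr rfl (g := fun j => q j • (-(∑ i, Dp j i)
        + (q j / 2) • (∑ i, ∑ k, ((A j i k) • D j i k + (A j i k) • D j i k))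
        + (1 - q j) • (∑ i, ∑ k, (((1 - q j)⁻¹ • ∑ j' ∈ Finset.univ.erase j, q j' • A j') k i) • D j i k)))
    (fun j _ => by rw [(hloc j).fderiv])]
  -- now pure linear-map algebra
  ext v
  simp only [ContinuousLinearMap.add_apply, ContinuousLinearMap.neg_apply,
    ContinuousLinearMap.smul_apply, ContinuousLinearMap.sum_apply, smul_eq_mul,
    ContinuousLinearMap.coe_sum', Finset.sum_apply, ContinuousLinearMap.coe_smul',
    Pi.smul_apply, Matrix.smul_apply, Matrix.sum_apply]
  have hne : ∀ j : Fin J, (1 - q j) ≠ 0 := fun j => sub_ne_zero.mpr (hqlt j).ne'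
  have hsymA : ∀ j' (i k : Fin H), A j' k i = A j' i k := by
    intro j' i k
    have := (hsym j' θ0).apply i k
    simpa [hA] using this
  have key : ∀ j : Fin J,
      q j * (-(∑ i, (Dp j i) v)
        + q j / 2 * ∑ i, ∑ k, (A j i k * (D j i k) v + A j i k * (D j i k) v)
        + (1 - q j) * ∑ i, ∑ k,
            ((1 - q j)⁻¹ * ∑ j' ∈ Finset.univ.erase j, q j' * A j' k i) * (D j i k) v)
      = q j * -(∑ i, (Dp j i) v)
        + ∑ i, ∑ k, q j * ((∑ j', q j' * A j' i k) * (D j i k) v) := by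
    intro j
    have e2 : q j / 2 * ∑ i, ∑ k, (A j i k * (D j i k) v + A j i k * (D j i k) v)
        = ∑ i, ∑ k, q j * A j i k * (D j i k) v := by
      rw [Finset.mul_sum]
      refine Finset.sum_congr rfl fun i _ => ?_
      rw [Finset.mul_sum]
      refine Finset.sum_congr rfl fun k _ => ?_
      ring
    have e3 : (1 - q j) * ∑ i, ∑ k,
        ((1 - q j)⁻¹ * ∑ j' ∈ Finset.univ.erase j, q j' * A j' k i) * (D j i k) v
        = ∑ i, ∑ k, (∑ j' ∈ Finset.univ.erase j, q j' * A j' i k) * (D j i k) v := by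
      rw [Finset.mul_sum]
      refine Finset.sum_congr rfl fun i _ => ?_
      rw [Finset.mul_sum]
      refine Finset.sum_congr rfl fun k _ => ?_
      have hc : ∑ j' ∈ Finset.univ.erase j, q j' * A j' k i
          = ∑ j' ∈ Finset.univ.erase j, q j' * A j' i k :=
        Finset.sum_congr rfl fun j' _ => by rw [hsymA]
      calc (1 - q j) * (((1 - q j)⁻¹ * ∑ j' ∈ Finset.univ.erase j, q j' * A j' k i)
              * (D j i k) v)
          = ((1 - q j) * (1 - q j)⁻¹)
              * ((∑ j' ∈ Finset.univ.erase j, q j' * A j' k i) * (D j i k) v) := by ring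
        _ = (∑ j' ∈ Finset.univ.erase j, q j' * A j' i k) * (D j i k) v := by
            rw [mul_inv_cancel₀ (hne j), one_mul, hc]
    rw [e2, e3, mul_add, mul_add, add_assoc]
    congr 1
    rw [Finset.mul_sum, Finset.mul_sum, ← Finset.sum_add_distrib]
    refine Finset.sum_congr rfl fun i _ => ?_
    rw [Finset.mul_sum, Finset.mul_sum, ← Finset.sum_add_distrib]
    refine Finset.sum_congr rfl fun k _ => ?_
    rw [← Finset.add_sum_erase (a := j) Finset.univ (fun j' => q j' * A j' i k)
      (Finset.mem_univ j)]
    ring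
  rw [Finset.sum_congr rfl fun j _ => key j, Finset.sum_add_distrib]
  congr 1
  · simp [mul_neg, Finset.sum_neg_distrib]
  · have hL : (1:ℝ) / 2 *
        ∑ i, ∑ k,
          ((∑ j, q j * A j i k) * ∑ j, q j * (D j i k) v +
            (∑ j, q j * A j i k) * ∑ j, q j * (D j i k) v)
        = ∑ i, ∑ k, ∑ j, q j * ((∑ j', q j' * A j' i k) * (D j i k) v) := by
      rw [Finset.mul_sum]
      refine Finset.sum_congr rfl fun i _ => ?_
      rw [Finset.mul_sum]
      refine Finset.sum_congr rfl fun k _ => ?_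
      rw [← two_mul, ← mul_assoc]
      norm_num
      rw [Finset.mul_sum]
      exact Finset.sum_congr rfl fun j _ => by ring
    rw [hL]
    rw [show (∑ x : Fin J, ∑ i : Fin H, ∑ k : Fin H, q x * ((∑ j' : Fin J, q j' * A j' i k) * (D x i k) v))
        = ∑ i : Fin H, ∑ x : Fin J, ∑ k : Fin H, q x * ((∑ j' : Fin J, q j' * A j' i k) * (D x i k) v)
      from Finset.sum_comm]
    exact Finset.sum_congr rfl fun i _ => Finset.sum_comm
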